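/- arXiv:1809.04224 — 10 statements merged into one kernel-verified Lean document; each statement's English description precedes it below -/
import Mathlib

section
/- Let p and q be real numbers with 0 < p < 1/2 and 1 - p ≤ q ≤ 1. Consider pairs (x, y) ∈ [0,1]×[0,1], where x = Pr[σ⁺ | g = 0] and y = Pr[σ⁺ | g = 1], that satisfy the university's non-negative-utility constraint x·(q·(1-p) - p·(1-q)) ≤ y·(p·q - (1-p)·(1-q)), and define the school's utility f(x,y) = y·(p·q + (1-p)·(1-q)) + x·(p·(1-q) + (1-p)·q). Then the pair x* = (p + q - 1)/(q - p), y* = 1 satisfies x* ∈ [0,1], satisfies the constraint, and maximizes f: for every feasible pair (x,y), f(x,y) ≤ f(x*, y*). -/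
/-- Theorem (optimal signaling scheme, no test): with x = Pr[σ⁺|g=0] and
y = Pr[σ⁺|g=1], the pair (x*, y*) = ((p+q-1)/(q-p), 1) is feasible and maximizes
the school's utility f(x,y) = y·(pq + (1-p)(1-q)) + x·(p(1-q) + (1-p)q) over all
feasible pairs. -/
theorem opt_signaling_no_test (p q : ℝ) (hp0 : 0 < p) (hp : p < 1/2)
    (hq1 : 1 - p ≤ q) (hq2 : q ≤ 1) :
    (0 ≤ (p + q - 1)/(q - p) ∧ (p + q - 1)/(q - p) ≤ 1) ∧
    ((p + q - 1)/(q - p)) * (q * (1 - p) - p * (1 - q)) ≤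
      1 * (p * q - (1 - p) * (1 - q)) ∧
    ∀ x y : ℝ, 0 ≤ x → x ≤ 1 → 0 ≤ y → y ≤ 1 →
      x * (q * (1 - p) - p * (1 - q)) ≤ y * (p * q - (1 - p) * (1 - q)) →
      y * (p * q + (1 - p) * (1 - q)) + x * (p * (1 - q) + (1 - p) * q) ≤
        1 * (p * q + (1 - p) * (1 - q)) +
          ((p + q - 1)/(q - p)) * (p * (1 - q) + (1 - p) * q) := by
  have hqp : 0 < q - p := by linarith
  have hnum : 0 ≤ p + q - 1 := by linarith
  have hdiv : (p + q - 1)/(q - p) * (q - p) = p + q - 1 :=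
    div_mul_cancel₀ _ (ne_of_gt hqp)
  refine ⟨⟨div_nonneg hnum hqp.le, ?_⟩, ?_, ?_⟩
  · rw [div_le_one hqp]; linarith
  · nlinarith [hdiv]
  · intro x y hx0 hx1 hy0 hy1 hcon
    -- x ≤ y*(p+q-1)/(q-p) and y ≤ 1
    have hA : 0 ≤ p * q + (1 - p) * (1 - q) := by nlinarith
    have hB : 0 ≤ p * (1 - q) + (1 - p) * q := by nlinarith
    have hx : x * (q - p) ≤ p + q - 1 := by nlinarith
    have hxle : x ≤ (p + q - 1)/(q - p) := by
      rw [le_div_iff₀ hqp]; exact hx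
    nlinarith [mul_le_mul_of_nonneg_right hxle hB,
      mul_le_mul_of_nonneg_right hy1 hA]
end

section
/- Let p, q, q' be real numbers with 0 < p < 1/2 and 1 - p ≤ q' < q ≤ 1. Then U_s(p,q') ≤ U_s(p,q) ≤ (1/(1-p))·U_s(p,q'): greater grade accuracy benefits a strategic school, but increases its utility by a factor of at most 1/(1-p). -/
/-- The strategic school's expected utility. -/
noncomputable def U_s (p q : ℝ) : ℝ := 1 + (p + q - 2 * p * q) * (2 * p - 1) / (q - p)

/-- Greater grade accuracy benefits a strategic school, by a factor of at most
1/(1-p): U_s(p,q') ≤ U_s(p,q) ≤ (1/(1-p))·U_s(p,q') for 1-p ≤ q' < q ≤ 1. -/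
theorem accuracy_benefits_strategic (p q q' : ℝ) (hp0 : 0 < p) (hp : p < 1/2)
    (hq'1 : 1 - p ≤ q') (hq' : q' < q) (hq2 : q ≤ 1) :
    U_s p q' ≤ U_s p q ∧ U_s p q ≤ (1 / (1 - p)) * U_s p q' := by
  have hqp : (0:ℝ) < q - p := by linarith
  have hq'p : (0:ℝ) < q' - p := by linarith
  have h1p : (0:ℝ) < 1 - p := by linarith
  have hU : U_s p q = 2 * p * (1 - p) * (2 * q - 1) / (q - p) := by
    unfold U_s; field_simp; ring
  have hU' : U_s p q' = 2 * p * (1 - p) * (2 * q' - 1) / (q' - p) := by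
    unfold U_s; field_simp; ring
  constructor
  · rw [hU, hU', div_le_div_iff₀ hq'p hqp]
    nlinarith [mul_nonneg (mul_nonneg (mul_nonneg (by linarith : (0:ℝ) ≤ 2*p)
      h1p.le) (by linarith : (0:ℝ) ≤ 1 - 2*p)) (by linarith : (0:ℝ) ≤ q - q')]
  · rw [hU, hU']
    rw [div_mul_div_comm, div_le_div_iff₀ hqp (by positivity)]
    nlinarith [mul_nonneg (mul_nonneg (by positivity : (0:ℝ) ≤ 2*p*(1-p))
        hqp.le) (by linarith : (0:ℝ) ≤ q' - (1 - p)),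
      mul_nonneg (mul_nonneg (by positivity : (0:ℝ) ≤ 2*p*(1-p))
        (mul_nonneg (by linarith : (0:ℝ) ≤ 1 - q) (by linarith : (0:ℝ) ≤ 1 - 2*p))) hq'p.le]
end

section
/- Let p and q be real numbers with 0 < p < 1/2 and 1 - p ≤ q ≤ 1. Then U_r(p,q) ≤ U_s(p,q) ≤ 2·U_r(p,q): a strategic school has higher expected utility than a revealing school, but by a factor of at most 2. -/
/-- The revealing school's expected utility. -/
noncomputable def U_r (p q : ℝ) : ℝ := p * q + (1 - p) * (1 - q)

/-- A strategic school has higher expected utility than a revealing school,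
but by a factor of at most 2: U_r(p,q) ≤ U_s(p,q) ≤ 2·U_r(p,q). -/
theorem strategic_vs_revealing_utility (p q : ℝ) (hp0 : 0 < p) (hp : p < 1/2)
    (hq1 : 1 - p ≤ q) (hq2 : q ≤ 1) :
    U_r p q ≤ U_s p q ∧ U_s p q ≤ 2 * U_r p q := by
  have hd : 0 < q - p := by linarith
  unfold U_r U_s
  have hrw : 1 + (p + q - 2 * p * q) * (2 * p - 1) / (q - p)
      = ((q - p) + (p + q - 2 * p * q) * (2 * p - 1)) / (q - p) := by
    field_simp
  rw [hrw]
  constructor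
  · rw [le_div_iff₀ hd]
    nlinarith [sq_nonneg (q - p), sq_nonneg (1 - q), mul_pos hp0 hd, sq_nonneg (p + q - 1)]
  · rw [div_le_iff₀ hd]
    nlinarith [mul_nonneg (mul_nonneg (by linarith : (0:ℝ) ≤ 1 - 2*p)
      (by linarith : (0:ℝ) ≤ q)) (by linarith : (0:ℝ) ≤ 1 - q)]
end

section
/- Let p, q, q' be real numbers with 0 < p < 1/2 and 1 - p ≤ q' < q ≤ 1. Then U_r(p,q) ≤ U_r(p,q') ≤ 2·(1-p)·U_r(p,q): greater grade accuracy harms a revealing school, but decreases its utility by a factor of at most 2·(1-p). -/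
/-- Greater grade accuracy harms a revealing school, but by a factor of at most
2(1-p): U_r(p,q) ≤ U_r(p,q') ≤ 2·(1-p)·U_r(p,q) for 1-p ≤ q' < q ≤ 1. -/
theorem accuracy_harms_revealing (p q q' : ℝ) (hp0 : 0 < p) (hp : p < 1/2)
    (hq'1 : 1 - p ≤ q') (hq' : q' < q) (hq2 : q ≤ 1) :
    U_r p q ≤ U_r p q' ∧ U_r p q' ≤ 2 * (1 - p) * U_r p q := by
  unfold U_r
  constructor
  · nlinarith
  · nlinarith [mul_nonneg (by linarith : (0:ℝ) ≤ 1 - 2*p) (by linarith : (0:ℝ) ≤ q' - (1 - p)),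
      mul_nonneg (by linarith : (0:ℝ) ≤ 1 - p)
        (mul_nonneg (by linarith : (0:ℝ) ≤ 1 - 2*p) (by linarith : (0:ℝ) ≤ 1 - q))]
end

section
/- Let p, q, q' be real numbers with 0 < p < 1/2 and 1 - p ≤ q' < q ≤ 1. Then U_s(p,q') < U_s(p,q) and FPR_s(p,q') < FPR_s(p,q) (U_s and FPR_s are strictly increasing in q on [1-p, 1]), while U_r(p,q) < U_r(p,q'), FPR_r(p,q) < FPR_r(p,q'), FNR_r(p,q) < FNR_r(p,q'), and FNR_s(p,q) < FNR_s(p,q') (U_r, FPR_r, FNR_r, and FNR_s are strictly decreasing in q on [1-p, 1]). -/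
/-- The revealing school's false positive rate. -/
noncomputable def FPR_r (p q : ℝ) : ℝ := 1 - q

/-- The revealing school's false negative rate. -/
noncomputable def FNR_r (p q : ℝ) : ℝ := 1 - q

/-- The strategic school's false positive rate. -/
noncomputable def FPR_s (p q : ℝ) : ℝ := 1 - q + q * (p + q - 1) / (q - p)

/-- The strategic school's false negative rate. -/
noncomputable def FNR_s (p q : ℝ) : ℝ := (1 - q) * (1 - 2 * p) / (q - p)

/-- Monotonicity results: U_s and FPR_s are strictly increasing in q on [1-p,1],
while U_r, FPR_r, FNR_r and FNR_s are strictly decreasing in q on [1-p,1]. -/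
theorem monotonicity_in_grade_accuracy (p q q' : ℝ) (hp0 : 0 < p) (hp : p < 1/2)
    (hq'1 : 1 - p ≤ q') (hq' : q' < q) (hq2 : q ≤ 1) :
    U_s p q' < U_s p q ∧ FPR_s p q' < FPR_s p q ∧
    U_r p q < U_r p q' ∧ FPR_r p q < FPR_r p q' ∧
    FNR_r p q < FNR_r p q' ∧ FNR_s p q < FNR_s p q' := by
  have hd' : 0 < q' - p := by linarith
  have hd : 0 < q - p := by linarith
  have hdq : 0 < q - q' := by linarith
  have h1p : 0 < 1 - p := by linarith
  have h12p : 0 < 1 - 2 * p := by linarith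
  refine ⟨?_, ?_, ?_, ?_, ?_, ?_⟩
  · unfold U_s
    rw [add_lt_add_iff_left, div_lt_div_iff₀ hd' hd]
    nlinarith [mul_pos (mul_pos (mul_pos hp0 h1p) h12p) hdq]
  · unfold FPR_s
    have e : ∀ x : ℝ, p < x → 1 - x + x * (p + x - 1) / (x - p) = p * (2*x - 1) / (x - p) := by
      intro x hx
      have h : x - p ≠ 0 := by linarith
      field_simp [h]
      ring
    rw [e q' (by linarith), e q (by linarith), div_lt_div_iff₀ hd' hd]
    nlinarith [mul_pos (mul_pos hp0 h12p) hdq]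
  · unfold U_r; nlinarith [mul_pos h12p hdq]
  · unfold FPR_r; linarith
  · unfold FNR_r; linarith
  · unfold FNR_s
    rw [div_lt_div_iff₀ hd hd']
    nlinarith [mul_pos (mul_pos h12p h1p) hdq]
end

section
/- Let p and q be real numbers with 0 < p < 1/2 and 1 - p ≤ q ≤ 1. Then the revealing school's utility is maximized at q = 1 - p, i.e., U_r(p,q) ≤ U_r(p, 1-p) = 2·p·(1-p), and the impact on its utility of moving from noisy grades to accurate grades is bounded by 1/(2·(1-p)) ≤ U_r(p,1)/U_r(p,q) ≤ 1, where U_r(p,1) = p. -/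
/-- A revealing school's utility is maximized at q = 1-p, where it equals
2p(1-p); moreover 1/(2(1-p)) ≤ U_r(p,1)/U_r(p,q) ≤ 1 and U_r(p,1) = p. -/
theorem revealing_accuracy_impact (p q : ℝ) (hp0 : 0 < p) (hp : p < 1/2)
    (hq1 : 1 - p ≤ q) (hq2 : q ≤ 1) :
    U_r p q ≤ U_r p (1 - p) ∧ U_r p (1 - p) = 2 * p * (1 - p) ∧
    1 / (2 * (1 - p)) ≤ U_r p 1 / U_r p q ∧ U_r p 1 / U_r p q ≤ 1 ∧
    U_r p 1 = p := by
  have hU : U_r p q = p * q + (1 - p) * (1 - q) := rfl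
  have hUpos : 0 < p * q + (1 - p) * (1 - q) := by nlinarith
  have hUle : U_r p q ≤ 2 * p * (1 - p) := by simp only [U_r]; nlinarith
  have hUge : p ≤ U_r p q := by simp only [U_r]; nlinarith
  refine ⟨?_, ?_, ?_, ?_, ?_⟩
  · simp only [U_r]; nlinarith
  · simp only [U_r]; ring
  · simp only [U_r]
    rw [div_le_div_iff₀ (by linarith) hUpos]
    nlinarith
  · simp only [U_r]
    rw [div_le_one hUpos]
    nlinarith
  · simp only [U_r]; ring
end

section
/- Let p and q be real numbers with 0 < p < 1/2 and 1 - p ≤ q ≤ 1. Then 2·p·(1-p) ≤ U_s(p,q) ≤ U_s(p,1) = 2·p, so 1 ≤ U_s(p,1)/U_s(p,q) ≤ 1/(1-p) < 2; similarly, p ≤ FPR_s(p,q) ≤ FPR_s(p,1) = p/(1-p), so 1 ≤ FPR_s(p,1)/FPR_s(p,q) ≤ 1/(1-p) < 2. -/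
/-- For a strategic school: 2p(1-p) ≤ U_s(p,q) ≤ U_s(p,1) = 2p, so
1 ≤ U_s(p,1)/U_s(p,q) ≤ 1/(1-p) < 2; similarly p ≤ FPR_s(p,q) ≤ FPR_s(p,1) =
p/(1-p), so 1 ≤ FPR_s(p,1)/FPR_s(p,q) ≤ 1/(1-p) < 2. -/
theorem strategic_accuracy_impact (p q : ℝ) (hp0 : 0 < p) (hp : p < 1/2)
    (hq1 : 1 - p ≤ q) (hq2 : q ≤ 1) :
    (2 * p * (1 - p) ≤ U_s p q ∧ U_s p q ≤ U_s p 1 ∧ U_s p 1 = 2 * p ∧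
      1 ≤ U_s p 1 / U_s p q ∧ U_s p 1 / U_s p q ≤ 1 / (1 - p) ∧
      (1 : ℝ) / (1 - p) < 2) ∧
    (p ≤ FPR_s p q ∧ FPR_s p q ≤ FPR_s p 1 ∧ FPR_s p 1 = p / (1 - p) ∧
      1 ≤ FPR_s p 1 / FPR_s p q ∧ FPR_s p 1 / FPR_s p q ≤ 1 / (1 - p) ∧
      (1 : ℝ) / (1 - p) < 2) := by
  have hd : 0 < q - p := by linarith
  have hd' : q - p ≠ 0 := ne_of_gt hd
  have h1p : (0:ℝ) < 1 - p := by linarith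
  have h1p' : (1:ℝ) - p ≠ 0 := ne_of_gt h1p
  have hU1 : U_s p 1 = 2 * p := by
    unfold U_s; field_simp; ring
  have hUq : U_s p q = ((q - p) + (p + q - 2 * p * q) * (2 * p - 1)) / (q - p) := by
    unfold U_s; field_simp
  have hUlo : 2 * p * (1 - p) ≤ U_s p q := by
    rw [hUq, le_div_iff₀ hd]
    nlinarith [mul_nonneg (mul_nonneg hp0.le h1p.le) (by linarith : (0:ℝ) ≤ q - (1 - p))]
  have hUhi : U_s p q ≤ 2 * p := by
    rw [hUq, div_le_iff₀ hd]
    nlinarith [mul_nonneg (mul_nonneg hp0.le (by linarith : (0:ℝ) ≤ 1 - 2 * p))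
      (by linarith : (0:ℝ) ≤ 1 - q)]
  have hUpos : 0 < U_s p q := lt_of_lt_of_le (by positivity) hUlo
  have hFq : FPR_s p q = p * (2 * q - 1) / (q - p) := by
    unfold FPR_s; field_simp; ring
  have hF1 : FPR_s p 1 = p / (1 - p) := by
    unfold FPR_s; field_simp; ring
  have hFlo : p ≤ FPR_s p q := by
    rw [hFq, le_div_iff₀ hd]
    nlinarith [mul_nonneg hp0.le (by linarith : (0:ℝ) ≤ q - (1 - p))]
  have hFhi : FPR_s p q ≤ p / (1 - p) := by
    rw [hFq, div_le_div_iff₀ hd h1p]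
    nlinarith [mul_nonneg (mul_nonneg hp0.le (by linarith : (0:ℝ) ≤ 1 - q))
      (by linarith : (0:ℝ) ≤ 1 - 2 * p)]
  have hFpos : 0 < FPR_s p q := lt_of_lt_of_le hp0 hFlo
  have hhalf : (1:ℝ) / (1 - p) < 2 := by
    rw [div_lt_iff₀ h1p]; linarith
  refine ⟨⟨hUlo, by rw [hU1]; exact hUhi, hU1, ?_, ?_, hhalf⟩,
    ⟨hFlo, by rw [hF1]; exact hFhi, hF1, ?_, ?_, hhalf⟩⟩
  · rw [hU1]; exact (one_le_div hUpos).mpr hUhi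
  · rw [hU1, div_le_div_iff₀ hUpos h1p]; nlinarith [hUlo]
  · rw [hF1]; exact (one_le_div hFpos).mpr hFhi
  · rw [hF1, div_le_div_iff₀ hFpos h1p]
    rw [div_mul_cancel₀ _ h1p']
    linarith [hFlo]
end

section
/- Let p be a real number with 0 < p < 1/2. With accurate grades (q = 1): U_s(p,1) = 2·p = 2·U_r(p,1), FPR_s(p,1) = p/(1-p), FNR_s(p,1) = 0, and FPR_r(p,1) = FNR_r(p,1) = 0; that is, the optimal signaling scheme doubles the school's expected utility, raises its false positive rate from 0 to p/(1-p), and keeps its false negative rate at 0. -/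
/-- With accurate grades (q = 1): strategic signaling doubles the school's
utility, raises the FPR from 0 to p/(1-p) and keeps the FNR at 0. -/
theorem accurate_grades_signaling_impact (p : ℝ) (hp0 : 0 < p) (hp : p < 1/2) :
    U_s p 1 = 2 * p ∧ U_s p 1 = 2 * U_r p 1 ∧
    FPR_s p 1 = p / (1 - p) ∧ FNR_s p 1 = 0 ∧
    FPR_r p 1 = 0 ∧ FNR_r p 1 = 0 := by
  have h1 : (1 : ℝ) - p ≠ 0 := by linarith
  unfold U_s U_r FPR_s FNR_s FPR_r FNR_r
  refine ⟨?_, ?_, ?_, ?_, ?_, ?_⟩ <;> field_simp <;> ring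
end

section
/- Let p, q, q' be real numbers with 0 < p < 1/2 and 1 - p ≤ q' < q ≤ 1. Then 1 ≤ U_s(p,q)/U_r(p,q) ≤ 2, and the ratio is increasing in grade accuracy: U_s(p,q')/U_r(p,q') ≤ U_s(p,q)/U_r(p,q). -/
lemma Us_eq (p q : ℝ) (h : q ≠ p) :
    U_s p q = 2 * p * (1 - p) * (2 * q - 1) / (q - p) := by
  have h' : q - p ≠ 0 := sub_ne_zero.mpr h
  unfold U_s
  field_simp
  ring

/-- The ratio of a strategic school's to a revealing school's utility lies in
[1,2] and is increasing in grade accuracy. -/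
theorem utility_ratio_bounds_and_monotone (p q q' : ℝ) (hp0 : 0 < p) (hp : p < 1/2)
    (hq'1 : 1 - p ≤ q') (hq' : q' < q) (hq2 : q ≤ 1) :
    (1 ≤ U_s p q / U_r p q ∧ U_s p q / U_r p q ≤ 2) ∧
    U_s p q' / U_r p q' ≤ U_s p q / U_r p q := by
  have hq'h : (1:ℝ)/2 < q' := by linarith
  have hqh : (1:ℝ)/2 < q := by linarith
  have hq'p : p < q' := by linarith
  have hqp : p < q := by linarith
  have hq'2 : q' ≤ 1 := le_of_lt (lt_of_lt_of_le hq' hq2)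
  have hdp : (0:ℝ) < q - p := by linarith
  have hdp' : (0:ℝ) < q' - p := by linarith
  have hUr : 0 < U_r p q := by unfold U_r; nlinarith
  have hUr' : 0 < U_r p q' := by unfold U_r; nlinarith
  have hUs : U_s p q = 2 * p * (1 - p) * (2 * q - 1) / (q - p) :=
    Us_eq p q (ne_of_gt hqp)
  have hUs' : U_s p q' = 2 * p * (1 - p) * (2 * q' - 1) / (q' - p) :=
    Us_eq p q' (ne_of_gt hq'p)
  refine ⟨⟨?_, ?_⟩, ?_⟩
  · rw [le_div_iff₀ hUr, hUs, one_mul, le_div_iff₀ hdp]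
    have ha : 0 ≤ p + q - 1 := by linarith
    have hb : 0 ≤ p + q - 2 * p * q := by nlinarith [mul_nonneg hp0.le (by linarith : (0:ℝ) ≤ 1 - q), mul_nonneg (by linarith : (0:ℝ) ≤ q) (by linarith : (0:ℝ) ≤ 1 - p)]
    have h1 : 0 ≤ (p + q - 1) * (p + q - 2 * p * q) := mul_nonneg ha hb
    unfold U_r; nlinarith
  · rw [div_le_iff₀ hUr, hUs, div_le_iff₀ hdp]
    have h1 : 0 ≤ q * (1 - q) * (1 - 2 * p) :=
      mul_nonneg (mul_nonneg (by linarith) (by linarith)) (by linarith)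
    unfold U_r; nlinarith
  · rw [hUs, hUs', div_div, div_div,
      div_le_div_iff₀ (by positivity) (by positivity)]
    have hc : 0 ≤ 1 - q - q' + 2 * q * q' := by nlinarith [mul_nonneg (by linarith : (0:ℝ) ≤ 2*q-1) (by linarith : (0:ℝ) ≤ q')]
    have h1 : 0 ≤ 2 * p * (1 - p) * ((q - q') * (1 - 2 * p) * (1 - q - q' + 2 * q * q')) :=
      mul_nonneg (mul_nonneg (by linarith) (by linarith))
        (mul_nonneg (mul_nonneg (by linarith) (by linarith)) hc)
    unfold U_r; nlinarith
end

section
/- Let p and δ be real numbers with 0 < p < 1/2, δ ≤ 1, and p·δ - (1-p)·(1-δ) ≥ 0. Then 1 ≤ (1 - δ + p)/p ≤ 2; that is, with accurate grades (q = 1), the ratio of a strategic school's expected utility U_s(p,1,δ) = 1 - δ + p to a revealing school's expected utility U_r(p,1,δ) = p lies between 1 and 2, so the standardized test does not increase inequality beyond the factor 2 attained without a test. -/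
/-- With accurate grades (q = 1) and an informative standardized test, the
ratio of a strategic school's utility U_s(p,1,δ) = 1 - δ + p to a revealing
school's utility U_r(p,1,δ) = p lies between 1 and 2. -/
theorem test_ratio_accurate_grades (p δ : ℝ) (hp0 : 0 < p) (hp : p < 1/2)
    (hδ1 : δ ≤ 1) (hs1 : p * δ - (1 - p) * (1 - δ) ≥ 0) :
    1 ≤ (1 - δ + p) / p ∧ (1 - δ + p) / p ≤ 2 := by
  have h1 : 1 - δ ≤ p := by nlinarith
  constructor
  · rw [le_div_iff₀ hp0]; nlinarith
  · rw [div_le_iff₀ hp0]; nlinarith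
end
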